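/- Let A_1, …, A_M be real n×n Hurwitz matrices and B_1, …, B_M real n×m matrices. For each k ∈ {1,…,M}, let P_k be the unique symmetric positive semidefinite solution of A_k·P_k + P_k·A_kᵀ + B_k·B_kᵀ = 0, and set P_avg := ∑_{k=1}^{M} P_k. Then the range of P_avg is contained in the reachability subspace R. -/

import Mathlib

open Matrix Polynomial

-- eval of charpoly equals det of (diagonal μ - M)
lemma charpoly_eval_eq_det {n : ℕ} (M : Matrix (Fin n) (Fin n) ℂ) (μ : ℂ) :
    M.charpoly.eval μ = (Matrix.diagonal (fun _ => μ) - M).det := by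
  have h1 : M.charpoly.eval μ = (Polynomial.evalRingHom μ) (charmatrix M).det := rfl
  rw [h1, RingHom.map_det]
  congr 1
  ext i j
  by_cases h : i = j
  · subst h
    simp [charmatrix_apply_eq, RingHom.mapMatrix_apply]
  · simp [charmatrix_apply_ne _ _ _ h, Matrix.diagonal_apply_ne _ h,
      RingHom.mapMatrix_apply]

lemma mem_spectrum_iff_det {n : ℕ} (M : Matrix (Fin n) (Fin n) ℂ) (μ : ℂ) :
    μ ∈ spectrum ℂ M ↔ (Matrix.diagonal (fun _ => μ) - M).det = 0 := by
  rw [spectrum.mem_iff]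
  have : algebraMap ℂ (Matrix (Fin n) (Fin n) ℂ) μ = Matrix.diagonal (fun _ => μ) := by
    ext i j
    simp [Matrix.algebraMap_matrix_apply, Matrix.diagonal]
  rw [this, Matrix.isUnit_iff_isUnit_det, isUnit_iff_ne_zero, not_ne_iff]

lemma IsHurwitz.sylvester_eq_zero {n : ℕ} {A X : Matrix (Fin n) (Fin n) ℝ}
    (hA : ∀ μ ∈ spectrum ℂ (A.map (algebraMap ℝ ℂ)), μ.re < 0)
    (h : A * X + X * Aᵀ = 0) : X = 0 := by
  rcases Nat.eq_zero_or_pos n with hn | hn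
  · subst hn; ext i j; exact i.elim0
  set f : ℝ →+* ℂ := (algebraMap ℝ ℂ) with hf
  set A' : Matrix (Fin n) (Fin n) ℂ := A.map f with hA'
  set X' : Matrix (Fin n) (Fin n) ℂ := X.map f with hX'
  have hmap : A' * X' + X' * A'ᵀ = 0 := by
    have := congrArg (fun Y : Matrix (Fin n) (Fin n) ℝ => Y.map f) h
    simpa [Matrix.map_add, Matrix.map_mul, Matrix.transpose_map] using this
  have hcomm : A' * X' = X' * (-A'ᵀ) := by
    rw [mul_neg]
    linear_combination (norm := noncomm_ring) hmap
  have hpow : ∀ k : ℕ, A' ^ k * X' = X' * (-A'ᵀ) ^ k := by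
    intro k
    induction k with
    | zero => simp
    | succ k ih =>
      rw [pow_succ, pow_succ, mul_assoc, hcomm, ← mul_assoc, ih, mul_assoc]
  have hpoly : ∀ q : ℂ[X], (aeval A' q) * X' = X' * (aeval (-A'ᵀ) q) := by
    intro q
    induction q using Polynomial.induction_on' with
    | add p q hp hq => rw [map_add, map_add, add_mul, mul_add, hp, hq]
    | monomial k a =>
      rw [aeval_monomial, aeval_monomial, mul_assoc, hpow k, ← mul_assoc, ← mul_assoc,
        ← Algebra.commutes a X']
  have h0 : X' * aeval (-A'ᵀ) A'.charpoly = 0 := by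
    rw [← hpoly, Matrix.aeval_self_charpoly, zero_mul]
  have hunit : IsUnit (aeval (-A'ᵀ) A'.charpoly) := by
    rw [← spectrum.zero_notMem_iff ℂ]
    rw [spectrum.map_polynomial_aeval_of_degree_pos (-A'ᵀ) A'.charpoly
      (by rw [Matrix.charpoly_degree_eq_dim, Fintype.card_fin]; exact_mod_cast hn)]
    rintro ⟨μ, hμ, hev⟩
    -- μ ∈ spectrum(-A'ᵀ) and charpoly eval μ = 0
    have h1 : μ ∈ spectrum ℂ A' := by
      rw [mem_spectrum_iff_det, ← charpoly_eval_eq_det]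
      exact hev
    have h1' : μ.re < 0 := hA μ h1
    have h2 : (-μ) ∈ spectrum ℂ A' := by
      rw [mem_spectrum_iff_det] at hμ ⊢
      have e1 : Matrix.diagonal (fun _ : Fin n => -μ) - A'
          = -((Matrix.diagonal (fun _ => μ) - (-A'ᵀ))ᵀ) := by
        ext i j
        by_cases hij : i = j
        · subst hij
          simp only [Matrix.sub_apply, Matrix.diagonal_apply_eq, Matrix.neg_apply,
            Matrix.transpose_apply]
          ring
        · simp only [Matrix.sub_apply, Matrix.diagonal_apply_ne _ hij, Matrix.neg_apply,
            Matrix.transpose_apply, Matrix.diagonal_apply_ne _ (fun hh => hij hh.symm)]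
          ring
      rw [e1, Matrix.det_neg, Matrix.det_transpose, hμ, mul_zero]
    have h2' : (-μ).re < 0 := hA _ h2
    rw [Complex.neg_re] at h2'
    linarith
  obtain ⟨u, hu⟩ := hunit
  have hX'0 : X' = 0 := by
    calc X' = X' * ((u : Matrix (Fin n) (Fin n) ℂ) * ↑u⁻¹) := by
          rw [Units.mul_inv, mul_one]
      _ = (X' * ↑u) * ↑u⁻¹ := by rw [mul_assoc]
      _ = 0 := by rw [hu, h0, zero_mul]
  ext i j
  have h5 : algebraMap ℝ ℂ (X i j) = 0 := congrFun (congrFun hX'0 i) j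
  rwa [Complex.coe_algebraMap, Complex.ofReal_eq_zero] at h5

lemma sum_mulVec_eq {p q M : ℕ} (f : Fin M → Matrix (Fin p) (Fin q) ℝ) (v : Fin q → ℝ) :
    (∑ k : Fin M, f k) *ᵥ v = ∑ k : Fin M, (f k) *ᵥ v := by
  induction (Finset.univ : Finset (Fin M)) using Finset.induction_on with
  | empty => simp [Matrix.zero_mulVec]
  | insert _ _ hnot ih => simp [Matrix.add_mulVec, hnot, ih]

lemma mulVec_ext {p q : ℕ} {M N : Matrix (Fin p) (Fin q) ℝ}
    (h : ∀ v, M *ᵥ v = N *ᵥ v) : M = N :=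
  Matrix.toLin'.injective (LinearMap.ext fun v => by
    simpa [Matrix.toLin'_apply] using h v)

/-- A real square matrix is Hurwitz if every eigenvalue of it, viewed as a complex
matrix, has strictly negative real part. -/
def IsHurwitz {n : ℕ} (A : Matrix (Fin n) (Fin n) ℝ) : Prop :=
  ∀ μ ∈ spectrum ℂ (A.map (algebraMap ℝ ℂ)), μ.re < 0

theorem range_average_gramian_le_reachability_subspace
    {n m M : ℕ}
    (A : Fin M → Matrix (Fin n) (Fin n) ℝ)
    (B : Fin M → Matrix (Fin n) (Fin m) ℝ)
    (hA : ∀ k, IsHurwitz (A k))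
    (P : Fin M → Matrix (Fin n) (Fin n) ℝ)
    (hPpsd : ∀ k, (P k).PosSemidef)
    (hP : ∀ k, A k * P k + P k * (A k)ᵀ + B k * (B k)ᵀ = 0)
    -- the reachability subspace
    (R : Submodule ℝ (Fin n → ℝ))
    (hR : R = ⨆ (L : List (Matrix (Fin n) (Fin n) ℝ))
        (_ : ∀ X ∈ L, X ∈ Set.range A) (i : Fin M),
        LinearMap.range ((L.prod * B i).mulVecLin)) :
    LinearMap.range (∑ k : Fin M, P k).mulVecLin ≤ R := by
  -- generators of R are inside R
  have hgen : ∀ (L : List (Matrix (Fin n) (Fin n) ℝ)), (∀ X ∈ L, X ∈ Set.range A) →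
      ∀ i : Fin M, LinearMap.range ((L.prod * B i).mulVecLin) ≤ R := by
    intro L hL i
    rw [hR]
    exact le_iSup_of_le L (le_iSup_of_le hL (le_iSup
      (fun i : Fin M => LinearMap.range ((L.prod * B i).mulVecLin)) i))
  -- range of B is inside R
  have hBR : ∀ (i : Fin M) (v : Fin m → ℝ), (B i) *ᵥ v ∈ R := by
    intro i v
    have := hgen [] (by simp) i
    simp only [List.prod_nil, one_mul] at this
    exact this ⟨v, by rw [Matrix.mulVecLin_apply, Matrix.one_mul]⟩
  -- R is invariant under each A k
  have hAR : ∀ (k : Fin M) (v : Fin n → ℝ), v ∈ R → (A k) *ᵥ v ∈ R := by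
    intro k v hv
    suffices hmap : Submodule.map (A k).mulVecLin R ≤ R by
      exact hmap ⟨v, hv, rfl⟩
    conv_lhs => rw [hR]
    rw [Submodule.map_iSup]
    refine iSup_le fun L => ?_
    rw [Submodule.map_iSup]
    refine iSup_le fun hL => ?_
    rw [Submodule.map_iSup]
    refine iSup_le fun i => ?_
    rw [← LinearMap.range_comp, ← Matrix.mulVecLin_mul, ← Matrix.mul_assoc, ← List.prod_cons]
    refine hgen (A k :: L) ?_ i
    intro X hX
    rcases List.mem_cons.mp hX with rfl | hX
    · exact ⟨k, rfl⟩
    · exact hL X hX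
  -- construct the projection matrix E onto R
  obtain ⟨W, hW⟩ := Submodule.exists_isCompl R
  set π : (Fin n → ℝ) →ₗ[ℝ] (Fin n → ℝ) := R.subtype ∘ₗ (R.projectionOnto W hW) with hπ
  set E : Matrix (Fin n) (Fin n) ℝ := LinearMap.toMatrix' π with hE
  have hEapply : ∀ v, E *ᵥ v = π v := by
    intro v
    rw [← Matrix.toLin'_apply, hE, Matrix.toLin'_toMatrix']
  have hmem : ∀ v, E *ᵥ v ∈ R := by
    intro v
    rw [hEapply]
    exact (R.projectionOnto W hW v).2
  have hfix : ∀ v ∈ R, E *ᵥ v = v := by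
    intro v hv
    rw [hEapply, hπ]
    simp only [LinearMap.comp_apply]
    rw [show v = ((⟨v, hv⟩ : R) : Fin n → ℝ) from rfl,
      Submodule.projectionOnto_apply_left hW]
    rfl
  have hE2 : E * E = E := mulVec_ext fun v => by
    rw [← Matrix.mulVec_mulVec]
    exact hfix _ (hmem v)
  -- per-mode result
  suffices hk : ∀ k, ∀ v : Fin n → ℝ, (P k) *ᵥ v ∈ R by
    rintro x ⟨v, rfl⟩
    rw [Matrix.mulVecLin_apply]
    rw [sum_mulVec_eq]
    exact Submodule.sum_mem R fun k _ => hk k v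
  intro k
  have hEA : E * (A k * E) = A k * E := mulVec_ext fun v => by
    rw [← Matrix.mulVec_mulVec, ← Matrix.mulVec_mulVec]
    exact hfix _ (hAR k _ (hmem v))
  have hEB : E * B k = B k := mulVec_ext fun v => by
    rw [← Matrix.mulVec_mulVec]
    exact hfix _ (hBR k v)
  -- the Sylvester operator
  set T : Matrix (Fin n) (Fin n) ℝ →ₗ[ℝ] Matrix (Fin n) (Fin n) ℝ :=
    { toFun := fun X => A k * X + X * (A k)ᵀ
      map_add' := fun X Y => by noncomm_ring
      map_smul' := fun c X => by
        simp [Matrix.mul_smul, Matrix.smul_mul, smul_add] } with hT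
  have hTinj : Function.Injective T := by
    intro X Y hXY
    have h0 : T (X - Y) = 0 := by rw [map_sub, hXY, sub_self]
    have : A k * (X - Y) + (X - Y) * (A k)ᵀ = 0 := h0
    have := IsHurwitz.sylvester_eq_zero (hA k) this
    exact sub_eq_zero.mp this
  -- the invariant subspace of matrices supported on R
  set S : Submodule ℝ (Matrix (Fin n) (Fin n) ℝ) :=
    { carrier := {X | E * X * Eᵀ = X}
      add_mem' := fun {a b} ha hb => by
        simp only [Set.mem_setOf_eq] at *
        rw [mul_add, add_mul, ha, hb]
      zero_mem' := by simp
      smul_mem' := fun c {x} hx => by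
        simp only [Set.mem_setOf_eq] at *
        rw [Matrix.mul_smul, Matrix.smul_mul, hx] } with hS
  have hTS : ∀ X ∈ S, T X ∈ S := by
    intro X hX
    have hX' : E * X * Eᵀ = X := hX
    show E * (A k * X + X * (A k)ᵀ) * Eᵀ = A k * X + X * (A k)ᵀ
    have hEt : Eᵀ * Eᵀ = Eᵀ := by rw [← Matrix.transpose_mul, hE2]
    have e1 : E * (A k * X) * Eᵀ = A k * X := by
      conv_lhs => rw [← hX']
      calc E * (A k * (E * X * Eᵀ)) * Eᵀ
          = (E * (A k * E)) * X * (Eᵀ * Eᵀ) := by noncomm_ring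
        _ = (A k * E) * X * Eᵀ := by rw [hEA, hEt]
        _ = A k * (E * X * Eᵀ) := by noncomm_ring
        _ = A k * X := by rw [hX']
    have e2 : E * (X * (A k)ᵀ) * Eᵀ = X * (A k)ᵀ := by
      conv_lhs => rw [← hX']
      calc E * ((E * X * Eᵀ) * (A k)ᵀ) * Eᵀ
          = (E * E) * X * (Eᵀ * ((A k)ᵀ * Eᵀ)) := by noncomm_ring
        _ = (E * E) * X * (E * (A k * E))ᵀ := by
            rw [Matrix.transpose_mul, Matrix.transpose_mul]; noncomm_ring
        _ = E * X * (Eᵀ * (A k)ᵀ) := by rw [hE2, hEA, Matrix.transpose_mul]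
        _ = (E * X * Eᵀ) * (A k)ᵀ := by noncomm_ring
        _ = X * (A k)ᵀ := by rw [hX']
    rw [mul_add, add_mul, e1, e2]
  set T' : S →ₗ[ℝ] S := T.restrict hTS with hT'
  have hT'inj : Function.Injective T' := by
    intro a b hab
    exact Subtype.ext (hTinj (congrArg Subtype.val hab))
  have hT'surj : Function.Surjective T' :=
    (LinearMap.injective_iff_surjective).mp hT'inj
  have hBBS : -(B k * (B k)ᵀ) ∈ S := by
    show E * (-(B k * (B k)ᵀ)) * Eᵀ = -(B k * (B k)ᵀ)
    rw [Matrix.mul_neg, Matrix.neg_mul, neg_inj, ← Matrix.mul_assoc, hEB,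
      Matrix.mul_assoc, ← Matrix.transpose_mul, hEB]
  obtain ⟨Y, hY⟩ := hT'surj ⟨-(B k * (B k)ᵀ), hBBS⟩
  have hYval : T Y.val = -(B k * (B k)ᵀ) := congrArg Subtype.val hY
  have hPkT : T (P k) = -(B k * (B k)ᵀ) := by
    have := hP k
    show A k * P k + P k * (A k)ᵀ = -(B k * (B k)ᵀ)
    exact eq_neg_of_add_eq_zero_left (hP k)
  have hPY : P k = Y.val := hTinj (by rw [hPkT, hYval])
  have hPS : E * P k * Eᵀ = P k := by rw [hPY]; exact Y.2
  intro v
  rw [← hPS, mul_assoc, ← Matrix.mulVec_mulVec]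
  exact hmem _
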